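/- Let n ≥ 2 be an integer. In the affine chart x = 1, set f = y(y^(n-1) + z^n) and g = z(y^(n-1) + z^n) + y^(n+1) in ℂ[y,z], and let A = g·∂f/∂y − f·∂g/∂y and B = g·∂f/∂z − f·∂g/∂z. Then the Milnor number of the foliation at the origin equals (2n)² + 2n + 1; that is, dim_ℂ ℂ[[y,z]]/(A, B) = 4n² + 2n + 1, where (A,B) is the ideal generated by A and B viewed as formal power series. -/

import Mathlib

open MvPolynomial

section MilnorAux

/-- Shorthand for the formal power series ring `ℂ[[y,z]]`. -/
abbrev Rps := MvPowerSeries (Fin 2) ℂ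

@[simp, norm_cast]
theorem myCoe_neg {σ R : Type*} [CommRing R] (φ : MvPolynomial σ R) :
    ((-φ : MvPolynomial σ R) : MvPowerSeries σ R) = -(φ : MvPowerSeries σ R) :=
  map_neg (coeToMvPowerSeries.ringHom) φ

@[simp, norm_cast]
theorem myCoe_sub {σ R : Type*} [CommRing R] (φ ψ : MvPolynomial σ R) :
    ((φ - ψ : MvPolynomial σ R) : MvPowerSeries σ R) = (φ : MvPowerSeries σ R) - ψ :=
  map_sub (coeToMvPowerSeries.ringHom) φ ψ

@[simp, norm_cast]
theorem myCoe_natCast {σ R : Type*} [CommRing R] (k : ℕ) :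
    (((k : ℕ) : MvPolynomial σ R) : MvPowerSeries σ R) = (k : MvPowerSeries σ R) :=
  map_natCast (coeToMvPowerSeries.ringHom) k

theorem auxX_ne_zero : (MvPowerSeries.X 0 : Rps) ≠ 0 := by
  intro h
  have := congrArg (MvPowerSeries.coeff (R := ℂ) (Finsupp.single (0 : Fin 2) 1)) h
  rw [MvPowerSeries.coeff_X, if_pos rfl, map_zero] at this
  exact one_ne_zero this

theorem aux_dvd (a : Rps) (k : ℕ)
    (h : (MvPowerSeries.X 0 : Rps) ∣ a * (MvPowerSeries.X 1 : Rps) ^ k) :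
    (MvPowerSeries.X 0 : Rps) ∣ a := by
  rw [MvPowerSeries.X_dvd_iff] at h ⊢
  intro e he
  have h2 := h (e + Finsupp.single (1 : Fin 2) k) (by simp [he, Finsupp.single_apply])
  rw [MvPowerSeries.X_pow_eq, MvPowerSeries.coeff_add_mul_monomial, mul_one] at h2
  exact h2

theorem span_pair_congr₁ {a b c : Rps} (h : a - c ∈ Ideal.span {b}) :
    Ideal.span {a, b} = Ideal.span {c, b} := by
  obtain ⟨d, hd⟩ := Ideal.mem_span_singleton'.mp h
  apply le_antisymm <;> rw [Ideal.span_le] <;> rintro x (rfl | rfl)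
  · rw [show x = c + d * b by rw [hd]; ring]
    exact add_mem (Ideal.subset_span (Set.mem_insert _ _))
      (Ideal.mul_mem_left _ _ (Ideal.subset_span (Set.mem_insert_of_mem _ rfl)))
  · exact Ideal.subset_span (Set.mem_insert_of_mem _ rfl)
  · rw [show x = a - d * b by rw [hd]; ring]
    exact sub_mem (Ideal.subset_span (Set.mem_insert _ _))
      (Ideal.mul_mem_left _ _ (Ideal.subset_span (Set.mem_insert_of_mem _ rfl)))
  · exact Ideal.subset_span (Set.mem_insert_of_mem _ rfl)

theorem span_pair_congr₂ {a b c : Rps} (h : b - c ∈ Ideal.span {a}) :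
    Ideal.span {a, b} = Ideal.span {a, c} := by
  rw [Set.pair_comm a b, Set.pair_comm a c]
  exact span_pair_congr₁ h

theorem span_pair_neg₁ (a b : Rps) : Ideal.span {-a, b} = Ideal.span {a, b} := by
  apply le_antisymm <;> rw [Ideal.span_le] <;> rintro x (rfl | rfl)
  · exact neg_mem (Ideal.subset_span (Set.mem_insert _ _))
  · exact Ideal.subset_span (Set.mem_insert_of_mem _ rfl)
  · have hm : -x ∈ Ideal.span {-x, b} := Ideal.subset_span (Set.mem_insert _ _)
    simpa using neg_mem hm
  · exact Ideal.subset_span (Set.mem_insert_of_mem _ rfl)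

/-- finrank additivity along the exact sequence
`0 → R/(u,v) --·w--> R/(u,wv) → R/(u,w) → 0`. -/
theorem key_add {R : Type*} [CommRing R] [Algebra ℂ R] (u v w : R)
    (hinj : ∀ r : R, w * r ∈ Ideal.span {u, w * v} → r ∈ Ideal.span {u, v})
    (h1 : FiniteDimensional ℂ (R ⧸ Ideal.span {u, w}))
    (h2 : FiniteDimensional ℂ (R ⧸ Ideal.span {u, v})) :
    FiniteDimensional ℂ (R ⧸ Ideal.span {u, w * v}) ∧
    Module.finrank ℂ (R ⧸ Ideal.span {u, w * v})
      = Module.finrank ℂ (R ⧸ Ideal.span {u, w})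
        + Module.finrank ℂ (R ⧸ Ideal.span {u, v}) := by
  classical
  set I : Submodule ℂ R := (Ideal.span {u, w * v}).restrictScalars ℂ with hI
  set J : Submodule ℂ R := (Ideal.span {u, w}).restrictScalars ℂ with hJ
  set K : Submodule ℂ R := (Ideal.span {u, v}).restrictScalars ℂ with hK
  have eI := Submodule.Quotient.restrictScalarsEquiv ℂ (Ideal.span {u, w * v})
  have eJ := Submodule.Quotient.restrictScalarsEquiv ℂ (Ideal.span {u, w})
  have eK := Submodule.Quotient.restrictScalarsEquiv ℂ (Ideal.span {u, v})
  have h1' : FiniteDimensional ℂ (R ⧸ J) := Module.Finite.equiv eJ.symm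
  have h2' : FiniteDimensional ℂ (R ⧸ K) := Module.Finite.equiv eK.symm
  have hIJ : I ≤ J := by
    have : Ideal.span {u, w * v} ≤ Ideal.span {u, w} := by
      rw [Ideal.span_le]
      rintro x (rfl | rfl)
      · exact Ideal.subset_span (Set.mem_insert _ _)
      · rw [mul_comm]
        exact Ideal.mul_mem_left _ _ (Ideal.subset_span (Set.mem_insert_of_mem _ rfl))
    exact fun x hx => this hx
  set ψ : R →ₗ[ℂ] R ⧸ I := I.mkQ.comp (LinearMap.mulLeft ℂ w) with hψ
  have hker : LinearMap.ker ψ = K := by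
    ext r
    simp only [hψ, LinearMap.mem_ker, LinearMap.comp_apply, LinearMap.mulLeft_apply,
      Submodule.mkQ_apply, Submodule.Quotient.mk_eq_zero, hI, hK,
      Submodule.restrictScalars_mem]
    constructor
    · exact hinj r
    · intro hr
      refine Submodule.span_induction ?_ ?_ ?_ ?_ hr
      · rintro x (rfl | rfl)
        · rw [mul_comm]
          exact Ideal.mul_mem_left _ _ (Ideal.subset_span (Set.mem_insert _ _))
        · exact Ideal.subset_span (Set.mem_insert_of_mem _ rfl)
      · simp
      · intro x y _ _ hx hy
        rw [mul_add]; exact add_mem hx hy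
      · intro c x _ hx
        rw [smul_eq_mul, mul_left_comm]
        exact Ideal.mul_mem_left _ _ hx
  have hrange : LinearMap.range ψ = J.map I.mkQ := by
    apply le_antisymm
    · rintro x ⟨r, rfl⟩
      exact ⟨w * r, by
        simp only [hJ, Submodule.restrictScalars_mem]
        exact Ideal.mul_mem_right _ _ (Ideal.subset_span (Set.mem_insert_of_mem _ rfl)), rfl⟩
    · rintro x ⟨j, hj, rfl⟩
      have hj' : j ∈ Ideal.span {u, w} := hj
      obtain ⟨a, b, rfl⟩ := Ideal.mem_span_pair.mp hj'
      refine ⟨b, ?_⟩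
      simp only [hψ, LinearMap.comp_apply, LinearMap.mulLeft_apply, Submodule.mkQ_apply]
      rw [show (Submodule.Quotient.mk (a * u + b * w) : R ⧸ I)
          = Submodule.Quotient.mk (w * b) + Submodule.Quotient.mk (a * u) by
        rw [← Submodule.Quotient.mk_add]; ring_nf]
      rw [show (Submodule.Quotient.mk (a * u) : R ⧸ I) = 0 by
        rw [Submodule.Quotient.mk_eq_zero]
        simp only [hI, Submodule.restrictScalars_mem]
        exact Ideal.mul_mem_left _ _ (Ideal.subset_span (Set.mem_insert _ _)), add_zero]
  set S : Submodule ℂ (R ⧸ I) := J.map I.mkQ with hS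
  have eS : (R ⧸ K) ≃ₗ[ℂ] S := by
    rw [← hker, ← hrange]; exact ψ.quotKerEquivRange
  have eQ : ((R ⧸ I) ⧸ S) ≃ₗ[ℂ] R ⧸ J := Submodule.quotientQuotientEquivQuotient I J hIJ
  have hSfin : FiniteDimensional ℂ S := Module.Finite.equiv eS
  have hQfin : FiniteDimensional ℂ ((R ⧸ I) ⧸ S) := Module.Finite.equiv eQ.symm
  have hIfin : FiniteDimensional ℂ (R ⧸ I) := by
    have h := Submodule.fg_of_fg_map_of_fg_inf_ker S.mkQ (s := ⊤) ?_ ?_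
    · exact ⟨h⟩
    · rw [Submodule.map_top, Submodule.range_mkQ]
      exact Module.finite_def.mp hQfin
    · rw [top_inf_eq, Submodule.ker_mkQ]
      exact (Submodule.fg_iff_finiteDimensional S).mpr hSfin
  have hfinI : FiniteDimensional ℂ (R ⧸ Ideal.span {u, w * v}) := Module.Finite.equiv eI
  refine ⟨hfinI, ?_⟩
  have dim1 : Module.finrank ℂ ((R ⧸ I) ⧸ S) + Module.finrank ℂ S = Module.finrank ℂ (R ⧸ I) :=
    Submodule.finrank_quotient_add_finrank S
  rw [eI.symm.finrank_eq, eJ.symm.finrank_eq, eK.symm.finrank_eq, ← dim1,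
    eQ.finrank_eq, eS.finrank_eq]

theorem base_ker (k : ℕ) :
    LinearMap.ker (LinearMap.pi (fun i : Fin k =>
        (MvPowerSeries.coeff (R := ℂ) (Finsupp.single (1 : Fin 2) (i : ℕ)) : Rps →ₗ[ℂ] ℂ)))
      = (Ideal.span {(MvPowerSeries.X 0 : Rps),
          (MvPowerSeries.X 1 : Rps) ^ k}).restrictScalars ℂ := by
  classical
  ext F
  simp only [LinearMap.mem_ker, LinearMap.pi_apply, funext_iff, Pi.zero_apply,
    Submodule.restrictScalars_mem]
  constructor
  · intro h
    set G : Rps := fun e => MvPowerSeries.coeff (R := ℂ) (e + Finsupp.single (0 : Fin 2) 1) F with hG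
    set H : Rps := fun e => if e 0 = 0
      then MvPowerSeries.coeff (R := ℂ) (e + Finsupp.single (1 : Fin 2) k) F else 0 with hH
    have key : F = MvPowerSeries.X 0 * G + MvPowerSeries.X 1 ^ k * H := by
      ext e
      rw [map_add, show (MvPowerSeries.X 0 : Rps)
          = MvPowerSeries.monomial (R := ℂ) (Finsupp.single (0 : Fin 2) 1) 1 by
          rw [← pow_one (MvPowerSeries.X 0 : Rps), MvPowerSeries.X_pow_eq],
        MvPowerSeries.X_pow_eq, MvPowerSeries.coeff_monomial_mul,
        MvPowerSeries.coeff_monomial_mul]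
      by_cases h0 : e 0 = 0
      · rw [if_neg (by rw [Finsupp.single_le_iff, h0]; omega)]
        by_cases h1 : k ≤ e 1
        · rw [if_pos (by rwa [Finsupp.single_le_iff])]
          have he : e - Finsupp.single (1 : Fin 2) k + Finsupp.single (1 : Fin 2) k = e :=
            tsub_add_cancel_of_le (by rwa [Finsupp.single_le_iff])
          have h0' : (e - Finsupp.single (1 : Fin 2) k) 0 = 0 := by
            simp [Finsupp.tsub_apply, h0]
          rw [hH]
          show MvPowerSeries.coeff (R := ℂ) e F = 0 + 1 * (if _ then _ else _)
          rw [if_pos h0', he, zero_add, one_mul]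
        · rw [if_neg (by rwa [Finsupp.single_le_iff])]
          have he : e = Finsupp.single (1 : Fin 2) (e 1) := by
            ext a
            fin_cases a
            · simpa using h0
            · simp
          conv_lhs => rw [he]
          simpa using h ⟨e 1, by omega⟩
      · rw [if_pos (by rw [Finsupp.single_le_iff]; omega)]
        have he : e - Finsupp.single (0 : Fin 2) 1 + Finsupp.single (0 : Fin 2) 1 = e :=
          tsub_add_cancel_of_le (by rw [Finsupp.single_le_iff]; omega)
        have hterm2 : (if Finsupp.single (1 : Fin 2) k ≤ e then
            (1 : ℂ) * MvPowerSeries.coeff (R := ℂ) (e - Finsupp.single (1 : Fin 2) k) H else 0) = 0 := by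
          by_cases hle : Finsupp.single (1 : Fin 2) k ≤ e
          · rw [if_pos hle, hH]
            show (1 : ℂ) * (if _ then _ else _) = 0
            rw [if_neg (by rw [Finsupp.tsub_apply]; simpa using h0), mul_zero]
          · rw [if_neg hle]
        rw [hterm2, add_zero, one_mul, hG]
        show MvPowerSeries.coeff (R := ℂ) e F
          = MvPowerSeries.coeff (R := ℂ) (e - Finsupp.single (0 : Fin 2) 1 + Finsupp.single (0 : Fin 2) 1) F
        rw [he]
    show F ∈ Ideal.span {(MvPowerSeries.X 0 : Rps), (MvPowerSeries.X 1 : Rps) ^ k}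
    rw [key]
    exact Ideal.add_mem _
      (Ideal.mul_mem_right _ _ (Ideal.subset_span (Set.mem_insert _ _)))
      (Ideal.mul_mem_right _ _ (Ideal.subset_span (Set.mem_insert_of_mem _ rfl)))
  · intro hF i
    obtain ⟨a, b, rfl⟩ := Ideal.mem_span_pair.mp hF
    rw [map_add, show (MvPowerSeries.X 0 : Rps)
        = MvPowerSeries.monomial (R := ℂ) (Finsupp.single (0 : Fin 2) 1) 1 by
        rw [← pow_one (MvPowerSeries.X 0 : Rps), MvPowerSeries.X_pow_eq],
      MvPowerSeries.X_pow_eq, MvPowerSeries.coeff_mul_monomial,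
      MvPowerSeries.coeff_mul_monomial,
      if_neg (by rw [Finsupp.single_le_iff]; simp),
      if_neg (by rw [Finsupp.single_le_iff, Finsupp.single_eq_same, not_le]; exact i.isLt)]
    simp

theorem base_dim (k : ℕ) :
    FiniteDimensional ℂ
      (Rps ⧸ Ideal.span {(MvPowerSeries.X 0 : Rps), (MvPowerSeries.X 1 : Rps) ^ k}) ∧
    Module.finrank ℂ
      (Rps ⧸ Ideal.span {(MvPowerSeries.X 0 : Rps), (MvPowerSeries.X 1 : Rps) ^ k}) = k := by
  classical
  set φ : Rps →ₗ[ℂ] (Fin k → ℂ) := LinearMap.pi (fun i : Fin k =>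
      (MvPowerSeries.coeff (R := ℂ) (Finsupp.single (1 : Fin 2) (i : ℕ)) : Rps →ₗ[ℂ] ℂ)) with hφ
  have hsurj : Function.Surjective φ := by
    intro c
    refine ⟨∑ i : Fin k, MvPowerSeries.monomial (R := ℂ) (Finsupp.single (1 : Fin 2) (i : ℕ)) (c i), ?_⟩
    funext j
    have hiff : ∀ i : Fin k,
        Finsupp.single (1 : Fin 2) (j : ℕ) = Finsupp.single (1 : Fin 2) (i : ℕ) ↔ j = i := by
      intro i
      constructor
      · intro h
        exact Fin.ext (by exact_mod_cast Finsupp.single_injective (1 : Fin 2) h)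
      · rintro rfl; rfl
    simp only [hφ, LinearMap.pi_apply, map_sum, MvPowerSeries.coeff_monomial, hiff]
    simp
  have e1 : (Rps ⧸ LinearMap.ker φ) ≃ₗ[ℂ] (Fin k → ℂ) :=
    LinearMap.quotKerEquivOfSurjective φ hsurj
  rw [base_ker k] at e1
  have e2 := (Submodule.Quotient.restrictScalarsEquiv ℂ
      (Ideal.span {(MvPowerSeries.X 0 : Rps), (MvPowerSeries.X 1 : Rps) ^ k})).symm.trans e1
  constructor
  · exact Module.Finite.equiv e2.symm
  · rw [e2.finrank_eq]
    simp

theorem pow_dim (b1 q : Rps) (N : ℕ)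
    (hb1 : b1 = -((MvPowerSeries.X 1 : Rps) ^ N) + MvPowerSeries.X 0 * q) :
    ∀ k : ℕ,
      FiniteDimensional ℂ (Rps ⧸ Ideal.span {b1, (MvPowerSeries.X 0 : Rps) ^ (k + 1)}) ∧
      Module.finrank ℂ (Rps ⧸ Ideal.span {b1, (MvPowerSeries.X 0 : Rps) ^ (k + 1)})
        = (k + 1) * N := by
  have hbase : Ideal.span {b1, (MvPowerSeries.X 0 : Rps)}
      = Ideal.span {(MvPowerSeries.X 0 : Rps), (MvPowerSeries.X 1 : Rps) ^ N} := by
    rw [Set.pair_comm,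
      span_pair_congr₂ (show b1 - -((MvPowerSeries.X 1 : Rps) ^ N)
          ∈ Ideal.span {(MvPowerSeries.X 0 : Rps)} from
        Ideal.mem_span_singleton'.mpr ⟨q, by rw [hb1]; ring⟩),
      Set.pair_comm, span_pair_neg₁, Set.pair_comm]
  intro k
  induction k with
  | zero =>
    rw [pow_one, hbase]
    exact ⟨(base_dim N).1, by rw [(base_dim N).2]; ring⟩
  | succ k ih =>
    have hinj : ∀ r : Rps,
        (MvPowerSeries.X 0 : Rps) * r
          ∈ Ideal.span {b1, (MvPowerSeries.X 0 : Rps) * (MvPowerSeries.X 0 : Rps) ^ (k + 1)} →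
        r ∈ Ideal.span {b1, (MvPowerSeries.X 0 : Rps) ^ (k + 1)} := by
      intro r hr
      obtain ⟨c, d, hcd⟩ := Ideal.mem_span_pair.mp hr
      obtain ⟨c', hc'⟩ := aux_dvd c N
        ⟨c * q + d * (MvPowerSeries.X 0 : Rps) ^ (k + 1) - r, by
          rw [hb1] at hcd; linear_combination -hcd⟩
      have heq : (MvPowerSeries.X 0 : Rps) * (c' * b1 + d * (MvPowerSeries.X 0 : Rps) ^ (k + 1))
          = (MvPowerSeries.X 0 : Rps) * r := by
        rw [hc'] at hcd; linear_combination hcd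
      exact (mul_left_cancel₀ auxX_ne_zero heq) ▸ Ideal.mem_span_pair.mpr ⟨c', d, rfl⟩
    have hk := key_add b1 ((MvPowerSeries.X 0 : Rps) ^ (k + 1)) (MvPowerSeries.X 0 : Rps) hinj
      (by rw [hbase]; exact (base_dim N).1) ih.1
    rw [← pow_succ'] at hk
    refine ⟨hk.1, ?_⟩
    rw [hk.2, ih.2, hbase, (base_dim N).2]
    ring

end MilnorAux

/-- In the chart `x = 1`, with `f = y(y^(n-1) + z^n)`, `g = z(y^(n-1) + z^n) + y^(n+1)`,
the Milnor number at the origin of the foliation defined by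
`A dy + B dz`, `A = g·f_y − f·g_y`, `B = g·f_z − f·g_z`, equals `(2n)² + 2n + 1`:
`dim_ℂ ℂ[[y,z]]/(A,B) = 4n² + 2n + 1`. -/
theorem stmt_3 (n : ℕ) (hn : 2 ≤ n)
    (f g A B : MvPolynomial (Fin 2) ℂ)
    (hf : f = X 0 * (X 0 ^ (n - 1) + X 1 ^ n))
    (hg : g = X 1 * (X 0 ^ (n - 1) + X 1 ^ n) + X 0 ^ (n + 1))
    (hA : A = g * pderiv 0 f - f * pderiv 0 g)
    (hB : B = g * pderiv 1 f - f * pderiv 1 g) :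
    Module.finrank ℂ
      (MvPowerSeries (Fin 2) ℂ ⧸
        Ideal.span {(A : MvPowerSeries (Fin 2) ℂ), (B : MvPowerSeries (Fin 2) ℂ)}) =
      4 * n ^ 2 + 2 * n + 1 := by
  obtain ⟨m, rfl⟩ : ∃ m, n = m + 2 := ⟨n - 2, by omega⟩
  clear hn
  -- the polynomial-level cofactors
  set B1p : MvPolynomial (Fin 2) ℂ := -(X 0 ^ (2*m+2)) - X 1 ^ (2*m+4)
    + ((m : MvPolynomial (Fin 2) ℂ) + 2) * X 0 ^ (m+3) * X 1 ^ (m+1)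
    - 2 * X 0 ^ (m+1) * X 1 ^ (m+2) with hB1p
  set Pp : MvPolynomial (Fin 2) ℂ := X 0 ^ (2*m+1) * X 1 - X 0 ^ (2*m+3)
    + 2 * X 0 ^ m * X 1 ^ (m+3)
    - ((m : MvPolynomial (Fin 2) ℂ) + 2) * X 0 ^ (m+2) * X 1 ^ (m+2) with hPp
  set Qp : MvPolynomial (Fin 2) ℂ := -(X 0 ^ (2*m+1))
    + ((m : MvPolynomial (Fin 2) ℂ) + 2) * X 0 ^ (m+2) * X 1 ^ (m+1)
    - 2 * X 0 ^ m * X 1 ^ (m+2) with hQp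
  -- the polynomial identities
  have h1 : B = X 0 * B1p := by
    rw [hB, hf, hg, hB1p]
    simp only [show m+2-1 = m+1 from rfl, pderiv_mul, pderiv_pow, pderiv_X]
    simp [Pi.single_apply]
    ring
  have h2 : A = -(X 0 ^ (2*m+4)) - X 1 * B1p := by
    rw [hA, hf, hg, hB1p]
    simp only [show m+2-1 = m+1 from rfl, pderiv_mul, pderiv_pow, pderiv_X]
    simp [Pi.single_apply]
    ring
  have h3 : A = X 1 ^ (2*m+5) + X 0 * Pp := by
    rw [hA, hf, hg, hPp]
    simp only [show m+2-1 = m+1 from rfl, pderiv_mul, pderiv_pow, pderiv_X]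
    simp [Pi.single_apply]
    ring
  have h4 : B1p = -(X 1 ^ (2*m+4)) + X 0 * Qp := by
    rw [hB1p, hQp]; ring
  -- the power series versions
  have hs1 : (B : Rps) = MvPowerSeries.X 0 * (B1p : Rps) := by
    rw [h1]; push_cast; ring
  have hs2 : (A : Rps) = -((MvPowerSeries.X 0 : Rps) ^ (2*m+4))
      - MvPowerSeries.X 1 * (B1p : Rps) := by
    rw [h2]; push_cast; ring
  have hs3 : (A : Rps) = (MvPowerSeries.X 1 : Rps) ^ (2*m+5)
      + MvPowerSeries.X 0 * (Pp : Rps) := by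
    rw [h3]; push_cast; ring
  have hs4 : (B1p : Rps) = -((MvPowerSeries.X 1 : Rps) ^ (2*m+4))
      + MvPowerSeries.X 0 * (Qp : Rps) := by
    rw [h4]; push_cast; ring
  -- span equalities
  have e1 : Ideal.span {(A : Rps), (MvPowerSeries.X 0 : Rps)}
      = Ideal.span {(MvPowerSeries.X 0 : Rps), (MvPowerSeries.X 1 : Rps) ^ (2*m+5)} := by
    rw [Set.pair_comm,
      span_pair_congr₂ (show (A : Rps) - (MvPowerSeries.X 1 : Rps) ^ (2*m+5)
          ∈ Ideal.span {(MvPowerSeries.X 0 : Rps)} from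
        Ideal.mem_span_singleton'.mpr ⟨(Pp : Rps), by rw [hs3]; ring⟩)]
  have e2 : Ideal.span {(A : Rps), (B1p : Rps)}
      = Ideal.span {(B1p : Rps), (MvPowerSeries.X 0 : Rps) ^ (2*m+4)} := by
    rw [span_pair_congr₁ (show (A : Rps) - -((MvPowerSeries.X 0 : Rps) ^ (2*m+4))
          ∈ Ideal.span {(B1p : Rps)} from
        Ideal.mem_span_singleton'.mpr ⟨-(MvPowerSeries.X 1 : Rps), by rw [hs2]; ring⟩),
      span_pair_neg₁, Set.pair_comm]
  -- the dimension data on the right factors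
  have hpow := pow_dim (B1p : Rps) (Qp : Rps) (2*m+4) hs4 (2*m+3)
  rw [show 2*m+3+1 = 2*m+4 from rfl] at hpow
  -- the injectivity hypothesis for the main splitting
  have hinj : ∀ r : Rps,
      (MvPowerSeries.X 0 : Rps) * r
        ∈ Ideal.span {(A : Rps), (MvPowerSeries.X 0 : Rps) * (B1p : Rps)} →
      r ∈ Ideal.span {(A : Rps), (B1p : Rps)} := by
    intro r hr
    obtain ⟨c, d, hcd⟩ := Ideal.mem_span_pair.mp hr
    obtain ⟨c', hc'⟩ := aux_dvd c (2*m+5)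
      ⟨r - d * (B1p : Rps) - c * (Pp : Rps), by rw [hs3] at hcd; linear_combination hcd⟩
    have heq : (MvPowerSeries.X 0 : Rps) * (c' * (A : Rps) + d * (B1p : Rps))
        = (MvPowerSeries.X 0 : Rps) * r := by
      rw [hc'] at hcd; linear_combination hcd
    exact (mul_left_cancel₀ auxX_ne_zero heq) ▸ Ideal.mem_span_pair.mpr ⟨c', d, rfl⟩
  have hk := key_add (A : Rps) (B1p : Rps) (MvPowerSeries.X 0 : Rps) hinj
    (by rw [e1]; exact (base_dim (2*m+5)).1)
    (by rw [e2]; exact hpow.1)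
  rw [hs1, hk.2, e1, (base_dim (2*m+5)).2, e2, hpow.2]
  ring
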